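/- Let γ ⊂ ℝ^n be the attractor of a self-similar Jordan zipper S = {S_1, ..., S_m}, and suppose γ is an arc of bounded turning with constant M. Let p_min = min_i p_i where p_i is the ratio of S_i. Then for any two distinct points x, y ∈ γ, at least one of the following holds: (1) there exist a multi-index i = i_1...i_k and an index i_{k+1} such that γ_{i i_{k+1}} ⊆ γ_{xy} ⊆ γ_i; or (2) there exist multi-indices i, j with γ_i ∩ γ_j a single common endpoint, and indices i_{k+1}, j_{l+1}, such that γ_{i i_{k+1}} ∪ γ_{j j_{l+1}} ⊆ γ_{xy} ⊆ γ_i ∪ γ_j and γ_{i i_{k+1}} ∩ γ_{j j_{l+1}} = γ_i ∩ γ_j. In either case p_i ≤ M‖x − y‖ / (|γ| p_min) (and in case (2) also p_j ≤ M‖x − y‖ / (|γ| p_min)), where |γ| denotes diam(γ). -/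

import Mathlib

open Set Metric

/-- `S i`, for `i < m`, is a contracting similarity with ratio `r i ∈ (0,1)`. -/
def IsSimilaritySystem {X : Type*} [MetricSpace X] (m : ℕ)
    (S : ℕ → X → X) (r : ℕ → ℝ) : Prop :=
  ∀ i < m, 0 < r i ∧ r i < 1 ∧ ∀ x y, dist (S i x) (S i y) = r i * dist x y

/-- Self-similar zipper with maps `S 0, …, S (m-1)`, ratios `r`, vertices `z 0, …, z m`,
signature `ε` (values in `{0,1}`).  Here `S i` plays the role of the map `S_{i+1}` of the
paper, so the zipper conditions read `S i (z 0) = z (i + ε i)` and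
`S i (z m) = z (i + 1 - ε i)`. -/
def IsZipper {X : Type*} [MetricSpace X] (m : ℕ)
    (S : ℕ → X → X) (r : ℕ → ℝ) (z : ℕ → X) (ε : ℕ → ℕ) : Prop :=
  1 ≤ m ∧ IsSimilaritySystem m S r ∧ (∀ i < m, ε i ≤ 1) ∧
    ∀ i < m, S i (z 0) = z (i + ε i) ∧ S i (z m) = z (i + 1 - ε i)

/-- Linear zipper on `[0,1]`, with vertices `0 = t 0 < t 1 < … < t m = 1`. -/
def IsLinearZipper (m : ℕ) (T : ℕ → ℝ → ℝ) (r : ℕ → ℝ) (t : ℕ → ℝ) (ε : ℕ → ℕ) : Prop :=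
  IsZipper m T r t ε ∧ t 0 = 0 ∧ t m = 1 ∧ ∀ i < m, t i < t (i + 1)

/-- `K` is the attractor of the iterated function system `{S i : i < m}`. -/
def IsAttractor {X : Type*} [MetricSpace X] (m : ℕ) (S : ℕ → X → X) (K : Set X) : Prop :=
  K.Nonempty ∧ IsCompact K ∧ K = ⋃ i ∈ Finset.range m, S i '' K

/-- `g` is a structural parametrization of the zipper `S` (with vertices `z`)
relative to the linear zipper `T` (with vertices `t`). -/
def IsStructuralParam {X : Type*} [MetricSpace X] (m : ℕ) (S : ℕ → X → X)
    (T : ℕ → ℝ → ℝ) (t : ℕ → ℝ) (z : ℕ → X) (g : ℝ → X) : Prop :=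
  ContinuousOn g (Icc 0 1) ∧ (∀ i ≤ m, g (t i) = z i) ∧
    ∀ i < m, ∀ x ∈ Icc (0:ℝ) 1, S i (g x) = g (T i x)

/-- A Jordan zipper: a zipper whose attractor `γ` is a Jordan arc, i.e. some structural
parametrization is injective on `[0,1]` (hence a homeomorphism onto `γ`). -/
def IsJordanZipper {X : Type*} [MetricSpace X] (m : ℕ) (S : ℕ → X → X) (r : ℕ → ℝ)
    (z : ℕ → X) (ε : ℕ → ℕ) (γ : Set X) : Prop :=
  IsZipper m S r z ε ∧ IsAttractor m S γ ∧
    ∃ T rT t g, IsLinearZipper m T rT t ε ∧ IsStructuralParam m S T t z g ∧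
      InjOn g (Icc 0 1) ∧ g '' Icc 0 1 = γ

/-- `g` is an injective continuous parametrization of the arc `γ` by `[0,1]`. -/
def IsArcParam {X : Type*} [MetricSpace X] (γ : Set X) (g : ℝ → X) : Prop :=
  ContinuousOn g (Icc 0 1) ∧ InjOn g (Icc 0 1) ∧ g '' Icc 0 1 = γ

/-- Bounded turning with constant `M`: every subarc `γ_{xy}` (expressed via any
parametrization of the arc) has diameter at most `M‖x - y‖`. -/
def BoundedTurning {X : Type*} [MetricSpace X] (γ : Set X) (M : ℝ) : Prop :=
  0 < M ∧ ∀ g : ℝ → X, IsArcParam γ g →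
    ∀ s ∈ Icc (0:ℝ) 1, ∀ u ∈ Icc (0:ℝ) 1, diam (g '' uIcc s u) ≤ M * dist (g s) (g u)

/-- `f` agrees with the systems `S` and `S'` on `γ`: `f ∘ S i = S' i ∘ f` on `γ`. -/
def Agrees {X Y : Type*} [MetricSpace X] [MetricSpace Y] (m : ℕ)
    (S : ℕ → X → X) (S' : ℕ → Y → Y) (γ : Set X) (f : X → Y) : Prop :=
  ∀ i < m, ∀ x ∈ γ, f (S i x) = S' i (f x)

/-- `f` restricts to a homeomorphism of the compact set `γ` onto `γ'`. -/
def IsHomeoOnto {X Y : Type*} [MetricSpace X] [MetricSpace Y]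
    (γ : Set X) (γ' : Set Y) (f : X → Y) : Prop :=
  ContinuousOn f γ ∧ InjOn f γ ∧ f '' γ = γ'

/-- Composition `S_{i₁} ∘ … ∘ S_{i_k}` along a multi-index (a list). -/
def compS {X : Type*} (S : ℕ → X → X) : List ℕ → X → X
  | [] => id
  | i :: l => S i ∘ compS S l

/-- Product of the ratios along a multi-index. -/
def ratioProd (p : ℕ → ℝ) (l : List ℕ) : ℝ := (l.map p).prod

section AuxProofs

lemma compS_nil {X : Type*} (S : ℕ → X → X) : compS S [] = id := rfl

lemma compS_cons {X : Type*} (S : ℕ → X → X) (i : ℕ) (l : List ℕ) :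
    compS S (i :: l) = S i ∘ compS S l := rfl

lemma compS_append {X : Type*} (S : ℕ → X → X) (l₁ l₂ : List ℕ) :
    compS S (l₁ ++ l₂) = compS S l₁ ∘ compS S l₂ := by
  induction l₁ with
  | nil => rfl
  | cons i l ih => simp [compS, ih, Function.comp_assoc]

lemma ratioProd_nil (p : ℕ → ℝ) : ratioProd p [] = 1 := rfl

lemma ratioProd_cons (p : ℕ → ℝ) (i : ℕ) (l : List ℕ) :
    ratioProd p (i :: l) = p i * ratioProd p l := by simp [ratioProd]

lemma ratioProd_append (p : ℕ → ℝ) (l₁ l₂ : List ℕ) :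
    ratioProd p (l₁ ++ l₂) = ratioProd p l₁ * ratioProd p l₂ := by simp [ratioProd]

lemma simil_affine {f : ℝ → ℝ} {r : ℝ} (hr : 0 < r)
    (hf : ∀ x y, dist (f x) (f y) = r * dist x y) (x : ℝ) :
    f x = f 0 + (f 1 - f 0) * x := by
  have h0 : |f x - f 0| = r * |x| := by simpa [Real.dist_eq] using hf x 0
  have h1 : |f x - f 1| = r * |x - 1| := by simpa [Real.dist_eq] using hf x 1
  have hv : |f 1 - f 0| = r := by simpa [Real.dist_eq] using hf 1 0
  have hu2 : (f x - f 0)^2 = r^2 * x^2 := by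
    have := congrArg (·^2) h0
    simpa [sq_abs, mul_pow] using this
  have huv2 : (f x - f 1)^2 = r^2 * (x-1)^2 := by
    have := congrArg (·^2) h1
    simpa [sq_abs, mul_pow] using this
  have hv2 : (f 1 - f 0)^2 = r^2 := by
    have := congrArg (·^2) hv
    simpa [sq_abs] using this
  have key : (f x - f 0 - (f 1 - f 0) * x)^2 = 0 := by nlinarith [hu2, huv2, hv2]
  have := pow_eq_zero_iff (n := 2) (by norm_num) |>.mp key
  linarith [this]

lemma affine_image_uIcc (c d p q : ℝ) :
    (fun x => c + d * x) '' uIcc p q = uIcc (c + d * p) (c + d * q) := by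
  have : (fun x => c + d * x) = (fun x => c + x) ∘ (fun x => d * x) := rfl
  rw [this, Set.image_comp]
  rw [show (fun x => d * x) '' uIcc p q = uIcc (d*p) (d*q) from Set.image_const_mul_uIcc d p q]
  exact Set.image_const_add_uIcc c (d*p) (d*q)

section LinZip

variable {m : ℕ} {T : ℕ → ℝ → ℝ} {rT : ℕ → ℝ} {t : ℕ → ℝ} {ε : ℕ → ℕ}

lemma LZ.rpos (hL : IsLinearZipper m T rT t ε) {i : ℕ} (hi : i < m) : 0 < rT i :=
  (hL.1.2.1 i hi).1

lemma LZ.rlt (hL : IsLinearZipper m T rT t ε) {i : ℕ} (hi : i < m) : rT i < 1 :=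
  (hL.1.2.1 i hi).2.1

lemma LZ.dist_eq (hL : IsLinearZipper m T rT t ε) {i : ℕ} (hi : i < m) (x y : ℝ) :
    dist (T i x) (T i y) = rT i * dist x y := (hL.1.2.1 i hi).2.2 x y

lemma LZ.Tinj (hL : IsLinearZipper m T rT t ε) {i : ℕ} (hi : i < m) :
    Function.Injective (T i) := by
  intro x y hxy
  have := LZ.dist_eq hL hi x y
  rw [hxy, dist_self] at this
  have := (mul_eq_zero.mp this.symm).resolve_left (ne_of_gt (LZ.rpos hL hi))
  exact dist_eq_zero.mp this

lemma LZ.t0 (hL : IsLinearZipper m T rT t ε) : t 0 = 0 := hL.2.1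

lemma LZ.tm (hL : IsLinearZipper m T rT t ε) : t m = 1 := hL.2.2.1

lemma LZ.tlt (hL : IsLinearZipper m T rT t ε) {i : ℕ} (hi : i < m) : t i < t (i+1) :=
  hL.2.2.2 i hi

lemma LZ.tmono (hL : IsLinearZipper m T rT t ε) :
    ∀ {j}, j ≤ m → ∀ {i}, i ≤ j → t i ≤ t j := by
  intro j
  induction j with
  | zero => intro _ i hi; simp_all
  | succ j ih =>
    intro hj i hi
    rcases Nat.lt_succ_iff_lt_or_eq.mp (Nat.lt_succ_of_le hi) with h | h
    · exact le_trans (ih (by omega) (by omega)) (LZ.tlt hL (by omega)).le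
    · simp [h]

lemma LZ.tmem (hL : IsLinearZipper m T rT t ε) {i : ℕ} (hi : i ≤ m) :
    t i ∈ Icc (0:ℝ) 1 := by
  constructor
  · rw [← LZ.t0 hL]; exact LZ.tmono hL hi (Nat.zero_le i)
  · rw [← LZ.tm hL]; exact LZ.tmono hL le_rfl hi

lemma LZ.T0 (hL : IsLinearZipper m T rT t ε) {i : ℕ} (hi : i < m) : T i 0 = t (i + ε i) := by
  have := (hL.1.2.2.2 i hi).1; rwa [LZ.t0 hL] at this

lemma LZ.T1 (hL : IsLinearZipper m T rT t ε) {i : ℕ} (hi : i < m) :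
    T i 1 = t (i + 1 - ε i) := by
  have := (hL.1.2.2.2 i hi).2; rwa [LZ.tm hL] at this

lemma LZ.eps (hL : IsLinearZipper m T rT t ε) {i : ℕ} (hi : i < m) : ε i = 0 ∨ ε i = 1 :=
  Nat.le_one_iff_eq_zero_or_eq_one.mp (hL.1.2.2.1 i hi)

lemma LZ.affine (hL : IsLinearZipper m T rT t ε) {i : ℕ} (hi : i < m) (x : ℝ) :
    T i x = T i 0 + (T i 1 - T i 0) * x :=
  simil_affine (LZ.rpos hL hi) (LZ.dist_eq hL hi) x

lemma LZ.image_uIcc (hL : IsLinearZipper m T rT t ε) {i : ℕ} (hi : i < m) (p q : ℝ) :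
    T i '' uIcc p q = uIcc (T i p) (T i q) := by
  have h1 : EqOn (T i) (fun x => T i 0 + (T i 1 - T i 0) * x) (uIcc p q) :=
    fun x _ => LZ.affine hL hi x
  rw [Set.image_congr h1, affine_image_uIcc, ← LZ.affine hL hi p, ← LZ.affine hL hi q]

lemma LZ.image01 (hL : IsLinearZipper m T rT t ε) {i : ℕ} (hi : i < m) :
    T i '' Icc 0 1 = Icc (t i) (t (i+1)) := by
  rw [show Icc (0:ℝ) 1 = uIcc 0 1 from (uIcc_of_le zero_le_one).symm,
    LZ.image_uIcc hL hi, LZ.T0 hL hi, LZ.T1 hL hi]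
  rcases LZ.eps hL hi with h | h
  · simp only [h, Nat.add_zero, Nat.add_sub_cancel]
    exact uIcc_of_le (LZ.tlt hL hi).le
  · simp only [h, Nat.add_sub_cancel]
    exact uIcc_of_ge (LZ.tlt hL hi).le

end LinZip

lemma compS_simil {X : Type*} [MetricSpace X] {m : ℕ} {S : ℕ → X → X} {p : ℕ → ℝ}
    (hs : IsSimilaritySystem m S p) :
    ∀ w : List ℕ, (∀ j ∈ w, j < m) →
      ∀ x y, dist (compS S w x) (compS S w y) = ratioProd p w * dist x y := by
  intro w
  induction w with
  | nil => intro _ x y; simp [compS, ratioProd]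
  | cons i l ih =>
    intro hw x y
    have hi : i < m := hw i (by simp)
    have hl : ∀ j ∈ l, j < m := fun j hj => hw j (by simp [hj])
    calc dist (compS S (i::l) x) (compS S (i::l) y)
        = p i * dist (compS S l x) (compS S l y) := (hs i hi).2.2 _ _
      _ = p i * (ratioProd p l * dist x y) := by rw [ih hl]
      _ = ratioProd p (i::l) * dist x y := by rw [ratioProd_cons]; ring

lemma ratioProd_pos {m : ℕ} {p : ℕ → ℝ} (hp : ∀ i < m, 0 < p i) :
    ∀ w : List ℕ, (∀ j ∈ w, j < m) → 0 < ratioProd p w := by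
  intro w
  induction w with
  | nil => intro _; simp [ratioProd]
  | cons i l ih =>
    intro hw
    rw [ratioProd_cons]
    exact mul_pos (hp i (hw i (by simp))) (ih (fun j hj => hw j (by simp [hj])))

lemma compS_inj {X : Type*} [MetricSpace X] {m : ℕ} {S : ℕ → X → X} {p : ℕ → ℝ}
    (hs : IsSimilaritySystem m S p) {w : List ℕ} (hw : ∀ j ∈ w, j < m) :
    Function.Injective (compS S w) := by
  intro x y hxy
  have h := compS_simil hs w hw x y
  rw [hxy, dist_self] at h
  have hpos : 0 < ratioProd p w := ratioProd_pos (fun i hi => (hs i hi).1) w hw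
  exact dist_eq_zero.mp ((mul_eq_zero.mp h.symm).resolve_left (ne_of_gt hpos))

section Cells

variable {m : ℕ} {T : ℕ → ℝ → ℝ} {rT : ℕ → ℝ} {t : ℕ → ℝ} {ε : ℕ → ℕ}

lemma LZ.compT_image_uIcc (hL : IsLinearZipper m T rT t ε) :
    ∀ w : List ℕ, (∀ j ∈ w, j < m) →
      ∀ p q : ℝ, compS T w '' uIcc p q = uIcc (compS T w p) (compS T w q) := by
  intro w
  induction w with
  | nil => intro _ p q; simp [compS]
  | cons i l ih =>
    intro hw p q
    have hi : i < m := hw i (by simp)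
    have hl : ∀ j ∈ l, j < m := fun j hj => hw j (by simp [hj])
    rw [compS_cons, Set.image_comp, ih hl, LZ.image_uIcc hL hi]
    rfl

lemma LZ.cell_eq_uIcc (hL : IsLinearZipper m T rT t ε) {w : List ℕ}
    (hw : ∀ j ∈ w, j < m) :
    compS T w '' Icc 0 1 = uIcc (compS T w 0) (compS T w 1) := by
  rw [show Icc (0:ℝ) 1 = uIcc 0 1 from (uIcc_of_le zero_le_one).symm,
    LZ.compT_image_uIcc hL w hw]

lemma LZ.cell_subset (hL : IsLinearZipper m T rT t ε) :
    ∀ w : List ℕ, (∀ j ∈ w, j < m) → compS T w '' Icc 0 1 ⊆ Icc 0 1 := by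
  intro w
  induction w with
  | nil => intro _; simp [compS]
  | cons i l ih =>
    intro hw
    have hi : i < m := hw i (by simp)
    have hl : ∀ j ∈ l, j < m := fun j hj => hw j (by simp [hj])
    rw [compS_cons, Set.image_comp]
    refine subset_trans (Set.image_mono (ih hl)) ?_
    rw [LZ.image01 hL hi]
    exact Icc_subset_Icc (LZ.tmem hL (le_of_lt hi)).1 (LZ.tmem hL hi).2

lemma LZ.cell_append_single (hL : IsLinearZipper m T rT t ε) {w : List ℕ}
    (hw : ∀ j ∈ w, j < m) {i : ℕ} (hi : i < m) :
    compS T (w ++ [i]) '' Icc 0 1 = compS T w '' Icc (t i) (t (i+1)) := by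
  rw [compS_append, Set.image_comp]
  congr 1
  have h1 : compS T [i] '' Icc (0:ℝ) 1 = T i '' Icc 0 1 := by simp [compS]
  rw [h1, LZ.image01 hL hi]

lemma LZ.endpoint_mem (hL : IsLinearZipper m T rT t ε) (w : List ℕ) :
    compS T w 0 ∈ compS T w '' Icc 0 1 ∧ compS T w 1 ∈ compS T w '' Icc 0 1 :=
  ⟨Set.mem_image_of_mem _ (by norm_num), Set.mem_image_of_mem _ (by norm_num)⟩

end Cells

section Side

variable {m : ℕ} {T : ℕ → ℝ → ℝ} {rT : ℕ → ℝ} {t : ℕ → ℝ} {ε : ℕ → ℕ}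

lemma LZ.side_descend (hL : IsLinearZipper m T rT t ε) {c : ℕ} (hc : c < m)
    {a e a₁ e₁ : ℝ} (ha : T c a₁ = a) (he : T c e₁ = e)
    (H : ∃ w i₁, (∀ j ∈ w, j < m) ∧ i₁ < m ∧
        uIcc a₁ e₁ ⊆ compS T w '' Icc 0 1 ∧
        (e₁ = compS T w 0 ∨ e₁ = compS T w 1) ∧
        compS T (w ++ [i₁]) '' Icc 0 1 ⊆ uIcc a₁ e₁ ∧
        e₁ ∈ compS T (w ++ [i₁]) '' Icc 0 1) :
    ∃ w i₁, (∀ j ∈ w, j < m) ∧ i₁ < m ∧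
        uIcc a e ⊆ compS T w '' Icc 0 1 ∧
        (e = compS T w 0 ∨ e = compS T w 1) ∧
        compS T (w ++ [i₁]) '' Icc 0 1 ⊆ uIcc a e ∧
        e ∈ compS T (w ++ [i₁]) '' Icc 0 1 := by
  obtain ⟨w, i₁, hw, hi₁, h1, h2, h3, h4⟩ := H
  have hcomp : ∀ l : List ℕ, compS T (c :: l) '' Icc 0 1 = T c '' (compS T l '' Icc 0 1) := by
    intro l; rw [compS_cons, Set.image_comp]
  refine ⟨c :: w, i₁, ?_, hi₁, ?_, ?_, ?_, ?_⟩
  · intro j hj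
    rcases List.mem_cons.mp hj with rfl | hj
    · exact hc
    · exact hw j hj
  · rw [hcomp w, ← ha, ← he, ← LZ.image_uIcc hL hc]
    exact Set.image_mono h1
  · rcases h2 with h | h
    · left; rw [← he, h]; rfl
    · right; rw [← he, h]; rfl
  · rw [show (c :: w) ++ [i₁] = c :: (w ++ [i₁]) from rfl, hcomp (w ++ [i₁]),
      ← ha, ← he, ← LZ.image_uIcc hL hc]
    exact Set.image_mono h3
  · rw [show (c :: w) ++ [i₁] = c :: (w ++ [i₁]) from rfl, hcomp (w ++ [i₁]), ← he]
    exact Set.mem_image_of_mem _ h4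

lemma LZ.side (hL : IsLinearZipper m T rT t ε) {rmax : ℝ} (hrm0 : 0 < rmax)
    (hrm : ∀ i < m, rT i ≤ rmax) :
    ∀ n : ℕ, ∀ a e : ℝ, a ∈ Icc (0:ℝ) 1 → (e = 0 ∨ e = 1) → a ≠ e →
      rmax ^ n < |e - a| →
    ∃ w i₁, (∀ j ∈ w, j < m) ∧ i₁ < m ∧
        uIcc a e ⊆ compS T w '' Icc 0 1 ∧
        (e = compS T w 0 ∨ e = compS T w 1) ∧
        compS T (w ++ [i₁]) '' Icc 0 1 ⊆ uIcc a e ∧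
        e ∈ compS T (w ++ [i₁]) '' Icc 0 1 := by
  intro n
  induction n with
  | zero =>
    intro a e ha he _ hlt
    exfalso
    have h1 : |e - a| ≤ 1 := by
      rcases he with rfl | rfl <;> rw [abs_le] <;> constructor <;> linarith [ha.1, ha.2]
    rw [pow_zero] at hlt; linarith
  | succ n ih =>
    intro a e ha he hne hlt
    have hm : 1 ≤ m := hL.1.1
    have descend : ∀ c : ℕ, c < m → ∀ a₁ e₁ : ℝ, T c a₁ = a → T c e₁ = e →
        a₁ ∈ Icc (0:ℝ) 1 → (e₁ = 0 ∨ e₁ = 1) →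
        ∃ w i₁, (∀ j ∈ w, j < m) ∧ i₁ < m ∧
          uIcc a e ⊆ compS T w '' Icc 0 1 ∧
          (e = compS T w 0 ∨ e = compS T w 1) ∧
          compS T (w ++ [i₁]) '' Icc 0 1 ⊆ uIcc a e ∧
          e ∈ compS T (w ++ [i₁]) '' Icc 0 1 := by
      intro c hc a₁ e₁ haa hee ha₁ he₁01
      have hd : |e - a| = rT c * |e₁ - a₁| := by
        have h := LZ.dist_eq hL hc e₁ a₁
        rw [hee, haa, Real.dist_eq, Real.dist_eq] at h
        exact h
      have hmeas : rmax ^ n < |e₁ - a₁| := by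
        have h2 : rmax ^ n * rmax < rT c * |e₁ - a₁| := by
          rw [← pow_succ, ← hd]; exact hlt
        have h3 : rT c * |e₁ - a₁| ≤ rmax * |e₁ - a₁| :=
          mul_le_mul_of_nonneg_right (hrm c hc) (abs_nonneg _)
        have h4 : rmax * rmax ^ n < rmax * |e₁ - a₁| := by
          nlinarith
        exact lt_of_mul_lt_mul_left h4 hrm0.le
      have hne₁ : a₁ ≠ e₁ := by
        intro h; apply hne; rw [← haa, h, hee]
      exact LZ.side_descend hL hc haa hee (ih a₁ e₁ ha₁ he₁01 hne₁ hmeas)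
    rcases he with rfl | rfl
    · -- e = 0, cell 0
      have h0m : 0 < m := hm
      have ht10 : (0:ℝ) < t 1 := by
        have := LZ.tlt hL h0m; rw [LZ.t0 hL] at this; exact this
      by_cases hc : a ≤ t 1
      · have hmem : a ∈ T 0 '' Icc 0 1 := by
          rw [LZ.image01 hL h0m, LZ.t0 hL]
          exact ⟨ha.1, hc⟩
        obtain ⟨a₁, ha₁, haa⟩ := hmem
        obtain ⟨e₁, he₁01, hee⟩ : ∃ e₁, (e₁ = (0:ℝ) ∨ e₁ = 1) ∧ T 0 e₁ = 0 := by
          rcases LZ.eps hL h0m with h | h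
          · refine ⟨0, Or.inl rfl, ?_⟩
            rw [LZ.T0 hL h0m, h, LZ.t0 hL]
          · refine ⟨1, Or.inr rfl, ?_⟩
            rw [LZ.T1 hL h0m, h]
            simpa using LZ.t0 hL
        exact descend 0 h0m a₁ e₁ haa hee ha₁ he₁01
      · push_neg at hc
        have hid : compS T ([] : List ℕ) '' Icc (0:ℝ) 1 = Icc 0 1 := by simp [compS]
        have h5 : compS T [(0:ℕ)] '' Icc (0:ℝ) 1 = T 0 '' Icc 0 1 := by
          simp [compS]
        refine ⟨[], 0, by simp, h0m, ?_, Or.inl rfl, ?_, ?_⟩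
        · rw [hid, uIcc_of_ge ha.1]
          exact Icc_subset_Icc le_rfl ha.2
        · rw [List.nil_append, h5, LZ.image01 hL h0m, uIcc_of_ge ha.1, LZ.t0 hL]
          exact Icc_subset_Icc le_rfl hc.le
        · rw [List.nil_append, h5, LZ.image01 hL h0m, LZ.t0 hL]
          exact ⟨le_rfl, ht10.le⟩
    · -- e = 1, cell m-1
      set c := m - 1 with hcdef
      have hcm : c < m := by omega
      have hc1 : c + 1 = m := by omega
      have htc : t c < 1 := by
        have := LZ.tlt hL hcm; rw [hc1, LZ.tm hL] at this; exact this
      by_cases hcc : t c ≤ a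
      · have hmem : a ∈ T c '' Icc 0 1 := by
          rw [LZ.image01 hL hcm, hc1, LZ.tm hL]
          exact ⟨hcc, ha.2⟩
        obtain ⟨a₁, ha₁, haa⟩ := hmem
        obtain ⟨e₁, he₁01, hee⟩ : ∃ e₁, (e₁ = (0:ℝ) ∨ e₁ = 1) ∧ T c e₁ = 1 := by
          rcases LZ.eps hL hcm with h | h
          · refine ⟨1, Or.inr rfl, ?_⟩
            rw [LZ.T1 hL hcm, h, Nat.sub_zero, hc1, LZ.tm hL]
          · refine ⟨0, Or.inl rfl, ?_⟩
            rw [LZ.T0 hL hcm, h, hc1, LZ.tm hL]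
        exact descend c hcm a₁ e₁ haa hee ha₁ he₁01
      · push_neg at hcc
        have hid : compS T ([] : List ℕ) '' Icc (0:ℝ) 1 = Icc 0 1 := by simp [compS]
        have h5 : compS T [c] '' Icc (0:ℝ) 1 = T c '' Icc 0 1 := by simp [compS]
        refine ⟨[], c, by simp, hcm, ?_, Or.inr rfl, ?_, ?_⟩
        · rw [hid, uIcc_of_le ha.2]
          exact Icc_subset_Icc ha.1 le_rfl
        · rw [List.nil_append, h5, LZ.image01 hL hcm, hc1, LZ.tm hL, uIcc_of_le ha.2]
          exact Icc_subset_Icc hcc.le le_rfl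
        · rw [List.nil_append, h5, LZ.image01 hL hcm, hc1, LZ.tm hL]
          exact ⟨htc.le, le_rfl⟩
  
end Side

section MainInt

variable {m : ℕ} {T : ℕ → ℝ → ℝ} {rT : ℕ → ℝ} {t : ℕ → ℝ} {ε : ℕ → ℕ}

lemma LZ.exists_cell (hL : IsLinearZipper m T rT t ε) {a : ℝ} (h0 : 0 ≤ a) (h1 : a < 1) :
    ∃ i, i < m ∧ t i ≤ a ∧ a < t (i+1) := by
  by_contra hcon
  push_neg at hcon
  have hall : ∀ i, i ≤ m → t i ≤ a := by
    intro i
    induction i with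
    | zero => intro _; rw [LZ.t0 hL]; exact h0
    | succ i ih => intro h; exact hcon i (by omega) (ih (by omega))
  have := hall m le_rfl
  rw [LZ.tm hL] at this
  linarith

/-- The main interval dichotomy. -/
lemma LZ.mainInt (hL : IsLinearZipper m T rT t ε) {rmax : ℝ} (hrm0 : 0 < rmax)
    (hrm : ∀ i < m, rT i ≤ rmax) (hrm1 : rmax < 1) :
    ∀ n : ℕ, ∀ a b : ℝ, 0 ≤ a → a < b → b ≤ 1 → rmax ^ n < b - a →
    (∃ w i₁, (∀ j ∈ w, j < m) ∧ i₁ < m ∧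
        compS T (w ++ [i₁]) '' Icc 0 1 ⊆ Icc a b ∧ Icc a b ⊆ compS T w '' Icc 0 1) ∨
    (∃ w₁ w₂ i₁ j₁ pt, (∀ j ∈ w₁, j < m) ∧ (∀ j ∈ w₂, j < m) ∧ i₁ < m ∧ j₁ < m ∧
        (compS T w₁ '' Icc 0 1) ∩ (compS T w₂ '' Icc 0 1) = {pt} ∧
        (pt = compS T w₁ 0 ∨ pt = compS T w₁ 1) ∧
        (pt = compS T w₂ 0 ∨ pt = compS T w₂ 1) ∧
        (compS T (w₁ ++ [i₁]) '' Icc 0 1) ∪ (compS T (w₂ ++ [j₁]) '' Icc 0 1) ⊆ Icc a b ∧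
        Icc a b ⊆ (compS T w₁ '' Icc 0 1) ∪ (compS T w₂ '' Icc 0 1) ∧
        (compS T (w₁ ++ [i₁]) '' Icc 0 1) ∩ (compS T (w₂ ++ [j₁]) '' Icc 0 1) = {pt}) := by
  have hcompc : ∀ (c : ℕ) (l : List ℕ),
      compS T (c :: l) '' Icc (0:ℝ) 1 = T c '' (compS T l '' Icc 0 1) := by
    intro c l; rw [compS_cons, Set.image_comp]
  intro n
  induction n with
  | zero =>
    intro a b ha hab hb hlt
    exfalso
    rw [pow_zero] at hlt
    linarith
  | succ n ih =>
    intro a b ha hab hb hlt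
    by_cases hone : ∃ i, i < m ∧ t i ≤ a ∧ b ≤ t (i+1)
    · -- descend into a single cell
      obtain ⟨i, hi, hta, htb⟩ := hone
      have haT : a ∈ T i '' Icc 0 1 := by
        rw [LZ.image01 hL hi]; exact ⟨hta, le_trans hab.le htb⟩
      have hbT : b ∈ T i '' Icc 0 1 := by
        rw [LZ.image01 hL hi]; exact ⟨le_trans hta hab.le, htb⟩
      obtain ⟨a₁, ha₁, haa⟩ := haT
      obtain ⟨b₁, hb₁, hbb⟩ := hbT
      have hne : a₁ ≠ b₁ := by
        intro h; rw [h, hbb] at haa; exact absurd haa (ne_of_gt hab)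
      set lo := min a₁ b₁ with hlo
      set hi' := max a₁ b₁ with hhi
      have h0lo : 0 ≤ lo := le_min ha₁.1 hb₁.1
      have hhi1 : hi' ≤ 1 := max_le ha₁.2 hb₁.2
      have hlohi : lo < hi' := min_lt_max.mpr hne
      have huIcc : uIcc a₁ b₁ = Icc lo hi' := rfl
      have habs : hi' - lo = |b₁ - a₁| := by
        rw [hlo, hhi, max_sub_min_eq_abs, abs_sub_comm]
      have hdist : b - a = rT i * |b₁ - a₁| := by
        have h := LZ.dist_eq hL hi b₁ a₁
        rw [hbb, haa, Real.dist_eq, Real.dist_eq] at h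
        rw [← abs_of_pos (sub_pos.mpr hab), h]
      have hmeas : rmax ^ n < hi' - lo := by
        rw [habs]
        have h2 : rmax ^ n * rmax < rT i * |b₁ - a₁| := by
          rw [← pow_succ, ← hdist]; exact hlt
        have h3 : rT i * |b₁ - a₁| ≤ rmax * |b₁ - a₁| :=
          mul_le_mul_of_nonneg_right (hrm i hi) (abs_nonneg _)
        have h4 : rmax * rmax ^ n < rmax * |b₁ - a₁| := by nlinarith
        exact lt_of_mul_lt_mul_left h4 hrm0.le
      have hT : T i '' Icc lo hi' = Icc a b := by
        rw [← huIcc, LZ.image_uIcc hL hi, haa, hbb, uIcc_of_le hab.le]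
      rcases ih lo hi' h0lo hlohi hhi1 hmeas with
        ⟨w, i₁, hw, hi₁, h1, h2⟩ | ⟨w₁, w₂, i₁, j₁, pt, hw₁, hw₂, hi₁, hj₁,
          hcap, hep1, hep2, hcup1, hcup2, hcap2⟩
      · left
        refine ⟨i :: w, i₁, ?_, hi₁, ?_, ?_⟩
        · intro j hj; rcases List.mem_cons.mp hj with rfl | hj
          · exact hi
          · exact hw j hj
        · rw [show (i :: w) ++ [i₁] = i :: (w ++ [i₁]) from rfl, hcompc, ← hT]
          exact Set.image_mono h1
        · rw [hcompc, ← hT]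
          exact Set.image_mono h2
      · right
        refine ⟨i :: w₁, i :: w₂, i₁, j₁, T i pt, ?_, ?_, hi₁, hj₁, ?_, ?_, ?_, ?_, ?_, ?_⟩
        · intro j hj; rcases List.mem_cons.mp hj with rfl | hj
          · exact hi
          · exact hw₁ j hj
        · intro j hj; rcases List.mem_cons.mp hj with rfl | hj
          · exact hi
          · exact hw₂ j hj
        · rw [hcompc, hcompc, ← Set.image_inter (LZ.Tinj hL hi), hcap, Set.image_singleton]
        · rcases hep1 with h | h
          · left; rw [h]; rfl
          · right; rw [h]; rfl
        · rcases hep2 with h | h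
          · left; rw [h]; rfl
          · right; rw [h]; rfl
        · rw [show (i :: w₁) ++ [i₁] = i :: (w₁ ++ [i₁]) from rfl,
            show (i :: w₂) ++ [j₁] = i :: (w₂ ++ [j₁]) from rfl, hcompc, hcompc,
            ← Set.image_union, ← hT]
          exact Set.image_mono hcup1
        · rw [hcompc, hcompc, ← Set.image_union, ← hT]
          exact Set.image_mono hcup2
        · rw [show (i :: w₁) ++ [i₁] = i :: (w₁ ++ [i₁]) from rfl,
            show (i :: w₂) ++ [j₁] = i :: (w₂ ++ [j₁]) from rfl, hcompc, hcompc,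
            ← Set.image_inter (LZ.Tinj hL hi), hcap2, Set.image_singleton]
    · push_neg at hone
      obtain ⟨i, hi, hta, htb'⟩ := LZ.exists_cell hL ha (lt_of_lt_of_le hab hb)
      have hb1' : t (i+1) < b := hone i hi hta
      have hi1m : i + 1 < m := by
        rcases lt_or_eq_of_le (Nat.succ_le_of_lt hi) with h | h
        · exact h
        · exfalso
          have hteq : t (i+1) = 1 := by rw [show i+1 = m from h, LZ.tm hL]
          linarith
      by_cases hb2 : t (i+1+1) ≤ b
      · left
        refine ⟨[], i+1, by simp, hi1m, ?_, ?_⟩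
        · have h5 : compS T ([] ++ [i+1]) '' Icc (0:ℝ) 1 = T (i+1) '' Icc 0 1 := by
            simp [compS]
          rw [h5, LZ.image01 hL hi1m]
          exact Icc_subset_Icc htb'.le hb2
        · have hid : compS T ([] : List ℕ) '' Icc (0:ℝ) 1 = Icc 0 1 := by simp [compS]
          rw [hid]
          exact Icc_subset_Icc ha hb
      · push_neg at hb2
        set pt := t (i+1) with hptdef
        -- left side
        have haT : a ∈ T i '' Icc 0 1 := by
          rw [LZ.image01 hL hi]; exact ⟨hta, htb'.le⟩
        obtain ⟨a₁, ha₁, haa⟩ := haT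
        obtain ⟨e₁, he₁01, hee₁⟩ : ∃ e₁, (e₁ = (0:ℝ) ∨ e₁ = 1) ∧ T i e₁ = pt := by
          rcases LZ.eps hL hi with h | h
          · refine ⟨1, Or.inr rfl, ?_⟩
            rw [LZ.T1 hL hi, h, Nat.sub_zero]
          · refine ⟨0, Or.inl rfl, ?_⟩
            rw [LZ.T0 hL hi, h]
        have hne₁ : a₁ ≠ e₁ := by
          intro h; rw [h, hee₁] at haa; exact absurd haa (ne_of_gt htb')
        obtain ⟨n₁, hn₁⟩ := exists_pow_lt_of_lt_one
          (abs_pos.mpr (sub_ne_zero.mpr (Ne.symm hne₁))) hrm1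
        obtain ⟨w, i₁, hw, hi₁, hL1, hLep, hL2, hLmem⟩ :=
          LZ.side hL hrm0 hrm n₁ a₁ e₁ ha₁ he₁01 hne₁ hn₁
        -- right side
        have hbT : b ∈ T (i+1) '' Icc 0 1 := by
          rw [LZ.image01 hL hi1m]; exact ⟨hb1'.le, hb2.le⟩
        obtain ⟨b₂, hb₂, hbb⟩ := hbT
        obtain ⟨e₂, he₂01, hee₂⟩ : ∃ e₂, (e₂ = (0:ℝ) ∨ e₂ = 1) ∧ T (i+1) e₂ = pt := by
          rcases LZ.eps hL hi1m with h | h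
          · refine ⟨0, Or.inl rfl, ?_⟩
            rw [LZ.T0 hL hi1m, h, Nat.add_zero]
          · refine ⟨1, Or.inr rfl, ?_⟩
            rw [LZ.T1 hL hi1m, h, Nat.add_sub_cancel]
        have hne₂ : b₂ ≠ e₂ := by
          intro h; rw [h, hee₂] at hbb; exact absurd hbb (ne_of_lt hb1')
        obtain ⟨n₂, hn₂⟩ := exists_pow_lt_of_lt_one
          (abs_pos.mpr (sub_ne_zero.mpr (Ne.symm hne₂))) hrm1
        obtain ⟨w', j₁, hw', hj₁, hR1, hRep, hR2, hRmem⟩ :=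
          LZ.side hL hrm0 hrm n₂ b₂ e₂ hb₂ he₂01 hne₂ hn₂
        -- assemble
        right
        have hapt : a < pt := htb'
        have hptb : pt < b := hb1'
        have hltrans : T i '' uIcc a₁ e₁ = Icc a pt := by
          rw [LZ.image_uIcc hL hi, haa, hee₁, uIcc_of_le hapt.le]
        have hrtrans : T (i+1) '' uIcc b₂ e₂ = Icc pt b := by
          rw [LZ.image_uIcc hL hi1m, hbb, hee₂, uIcc_of_ge hptb.le]
        have hvalid₁ : ∀ j ∈ i :: w, j < m := by
          intro j hj; rcases List.mem_cons.mp hj with rfl | hj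
          · exact hi
          · exact hw j hj
        have hvalid₂ : ∀ j ∈ (i+1) :: w', j < m := by
          intro j hj; rcases List.mem_cons.mp hj with rfl | hj
          · exact hi1m
          · exact hw' j hj
        have hsubL : Icc a pt ⊆ compS T (i :: w) '' Icc 0 1 := by
          rw [hcompc, ← hltrans]; exact Set.image_mono hL1
        have hsubR : Icc pt b ⊆ compS T ((i+1) :: w') '' Icc 0 1 := by
          rw [hcompc, ← hrtrans]; exact Set.image_mono hR1
        have hsubL2 : compS T ((i :: w) ++ [i₁]) '' Icc 0 1 ⊆ Icc a pt := by
          rw [show (i :: w) ++ [i₁] = i :: (w ++ [i₁]) from rfl, hcompc, ← hltrans]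
          exact Set.image_mono hL2
        have hsubR2 : compS T (((i+1) :: w') ++ [j₁]) '' Icc 0 1 ⊆ Icc pt b := by
          rw [show ((i+1) :: w') ++ [j₁] = (i+1) :: (w' ++ [j₁]) from rfl, hcompc, ← hrtrans]
          exact Set.image_mono hR2
        have hmemL : pt ∈ compS T ((i :: w) ++ [i₁]) '' Icc 0 1 := by
          rw [show (i :: w) ++ [i₁] = i :: (w ++ [i₁]) from rfl, hcompc, ← hee₁]
          exact Set.mem_image_of_mem _ hLmem
        have hmemR : pt ∈ compS T (((i+1) :: w') ++ [j₁]) '' Icc 0 1 := by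
          rw [show ((i+1) :: w') ++ [j₁] = (i+1) :: (w' ++ [j₁]) from rfl, hcompc, ← hee₂]
          exact Set.mem_image_of_mem _ hRmem
        have hepL : pt = compS T (i :: w) 0 ∨ pt = compS T (i :: w) 1 := by
          rcases hLep with h | h
          · left; rw [← hee₁, h]; rfl
          · right; rw [← hee₁, h]; rfl
        have hepR : pt = compS T ((i+1) :: w') 0 ∨ pt = compS T ((i+1) :: w') 1 := by
          rcases hRep with h | h
          · left; rw [← hee₂, h]; rfl
          · right; rw [← hee₂, h]; rfl
        have hW₁sub : compS T (i :: w) '' Icc 0 1 ⊆ Icc (t i) pt := by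
          rw [hcompc]
          refine subset_trans (Set.image_mono (LZ.cell_subset hL w hw)) ?_
          rw [LZ.image01 hL hi]
        have hW₂sub : compS T ((i+1) :: w') '' Icc 0 1 ⊆ Icc pt (t (i+1+1)) := by
          rw [hcompc]
          refine subset_trans (Set.image_mono (LZ.cell_subset hL w' hw')) ?_
          rw [LZ.image01 hL hi1m]
        have hptW₁ : pt ∈ compS T (i :: w) '' Icc 0 1 := by
          rcases hepL with h | h
          · rw [h]; exact (LZ.endpoint_mem hL _).1
          · rw [h]; exact (LZ.endpoint_mem hL _).2
        have hptW₂ : pt ∈ compS T ((i+1) :: w') '' Icc 0 1 := by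
          rcases hepR with h | h
          · rw [h]; exact (LZ.endpoint_mem hL _).1
          · rw [h]; exact (LZ.endpoint_mem hL _).2
        refine ⟨i :: w, (i+1) :: w', i₁, j₁, pt, hvalid₁, hvalid₂, hi₁, hj₁, ?_, hepL, hepR,
          ?_, ?_, ?_⟩
        · ext x
          simp only [Set.mem_inter_iff, Set.mem_singleton_iff]
          constructor
          · rintro ⟨hx1, hx2⟩
            exact le_antisymm (hW₁sub hx1).2 (hW₂sub hx2).1
          · rintro rfl
            exact ⟨hptW₁, hptW₂⟩
        · refine Set.union_subset ?_ ?_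
          · exact subset_trans hsubL2 (Icc_subset_Icc le_rfl hptb.le)
          · exact subset_trans hsubR2 (Icc_subset_Icc hapt.le le_rfl)
        · intro x hx
          rcases le_total x pt with h | h
          · exact Or.inl (hsubL ⟨hx.1, h⟩)
          · exact Or.inr (hsubR ⟨h, hx.2⟩)
        · ext x
          simp only [Set.mem_inter_iff, Set.mem_singleton_iff]
          constructor
          · rintro ⟨hx1, hx2⟩
            exact le_antisymm (hsubL2 hx1).2 (hsubR2 hx2).1
          · rintro rfl
            exact ⟨hmemL, hmemR⟩

end MainInt

section Match

variable {X : Type*} [MetricSpace X]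

lemma arc_match {γ : Set X} {h g : ℝ → X}
    (hhc : ContinuousOn h (Icc 0 1)) (hhi : InjOn h (Icc 0 1)) (hhim : h '' Icc 0 1 = γ)
    (hgc : ContinuousOn g (Icc 0 1)) (hgi : InjOn g (Icc 0 1)) (hgim : g '' Icc 0 1 = γ) :
    ∃ f : ℝ → ℝ, ContinuousOn f (Icc 0 1) ∧ InjOn f (Icc 0 1) ∧
      ∀ x ∈ Icc (0:ℝ) 1, f x ∈ Icc (0:ℝ) 1 ∧ h (f x) = g x := by
  haveI : CompactSpace (Icc (0:ℝ) 1) := isCompact_iff_compactSpace.mp isCompact_Icc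
  have hmemh : ∀ x : Icc (0:ℝ) 1, h x.1 ∈ γ := fun x => hhim ▸ Set.mem_image_of_mem h x.2
  have hmemg : ∀ x : Icc (0:ℝ) 1, g x.1 ∈ γ := fun x => hgim ▸ Set.mem_image_of_mem g x.2
  have hbij : Function.Bijective (fun x : Icc (0:ℝ) 1 => (⟨h x.1, hmemh x⟩ : γ)) := by
    constructor
    · intro x y hxy
      exact Subtype.ext (hhi x.2 y.2 (congrArg Subtype.val hxy))
    · intro y
      have : y.1 ∈ h '' Icc 0 1 := hhim.symm ▸ y.2
      obtain ⟨x, hx, hxy⟩ := this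
      exact ⟨⟨x, hx⟩, Subtype.ext hxy⟩
  let e : Icc (0:ℝ) 1 ≃ γ := Equiv.ofBijective _ hbij
  have hecont : Continuous e := by
    apply Continuous.subtype_mk
    exact hhc.restrict
  let eh : Icc (0:ℝ) 1 ≃ₜ γ := Continuous.homeoOfEquivCompactToT2 (f := e) hecont
  let G : Icc (0:ℝ) 1 → γ := fun x => ⟨g x.1, hmemg x⟩
  have hGcont : Continuous G := Continuous.subtype_mk hgc.restrict _
  let F : Icc (0:ℝ) 1 → ℝ := fun x => (eh.symm (G x) : ℝ)
  have hFcont : Continuous F := continuous_subtype_val.comp (eh.symm.continuous.comp hGcont)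
  have hFprop : ∀ x : Icc (0:ℝ) 1, F x ∈ Icc (0:ℝ) 1 ∧ h (F x) = g x.1 := by
    intro x
    refine ⟨(eh.symm (G x)).2, ?_⟩
    have : e (eh.symm (G x)) = G x := eh.apply_symm_apply (G x)
    have := congrArg Subtype.val this
    exact this
  classical
  refine ⟨fun x => if hx : x ∈ Icc (0:ℝ) 1 then F ⟨x, hx⟩ else 0, ?_, ?_, ?_⟩
  · rw [continuousOn_iff_continuous_restrict]
    have : (Icc (0:ℝ) 1).restrict (fun x => if hx : x ∈ Icc (0:ℝ) 1 then F ⟨x, hx⟩ else 0)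
        = F := by
      funext x
      exact dif_pos x.2
    exact (congrArg Continuous this).mpr hFcont
  · intro x hx y hy hxy
    simp only [dif_pos hx, dif_pos hy] at hxy
    have h1 : g x = g y := by
      rw [← (hFprop ⟨x, hx⟩).2, ← (hFprop ⟨y, hy⟩).2, hxy]
    exact hgi hx hy h1
  · intro x hx
    simp only [dif_pos hx]
    exact hFprop ⟨x, hx⟩

lemma param_subarc {g h : ℝ → X} {f : ℝ → ℝ} {s u : ℝ}
    (hsu : s ≤ u) (hs : s ∈ Icc (0:ℝ) 1) (hu : u ∈ Icc (0:ℝ) 1)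
    (hfc : ContinuousOn f (Icc 0 1)) (hfi : InjOn f (Icc 0 1))
    (hfp : ∀ x ∈ Icc (0:ℝ) 1, h (f x) = g x) :
    g '' Icc s u = h '' uIcc (f s) (f u) := by
  have hsub : Icc s u ⊆ Icc (0:ℝ) 1 := Icc_subset_Icc hs.1 hu.2
  have hfc' : ContinuousOn f (Icc s u) := hfc.mono hsub
  have hfi' : InjOn f (Icc s u) := hfi.mono hsub
  have hsm : s ∈ Icc s u := left_mem_Icc.mpr hsu
  have hum : u ∈ Icc s u := right_mem_Icc.mpr hsu
  have him : f '' Icc s u = uIcc (f s) (f u) := by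
    rcases ContinuousOn.strictMonoOn_of_injOn_Icc' hsu hfc' hfi' with hmono | hanti
    · rw [uIcc_of_le (hmono.monotoneOn hsm hum hsu)]
      apply Set.Subset.antisymm
      · rintro y ⟨x, hx, rfl⟩
        exact ⟨hmono.monotoneOn hsm hx hx.1, hmono.monotoneOn hx hum hx.2⟩
      · exact intermediate_value_Icc hsu hfc'
    · rw [uIcc_of_ge (hanti.antitoneOn hsm hum hsu)]
      apply Set.Subset.antisymm
      · rintro y ⟨x, hx, rfl⟩
        exact ⟨hanti.antitoneOn hx hum hx.2, hanti.antitoneOn hsm hx hx.1⟩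
      · exact intermediate_value_Icc' hsu hfc'
  calc g '' Icc s u = (fun x => h (f x)) '' Icc s u :=
        Set.image_congr (fun x hx => (hfp x (hsub hx)).symm)
    _ = h '' (f '' Icc s u) := by rw [← Set.image_comp]; rfl
    _ = h '' uIcc (f s) (f u) := by rw [him]

end Match

section Transport

variable {X : Type*} [MetricSpace X] {m : ℕ} {S : ℕ → X → X} {p : ℕ → ℝ} {z : ℕ → X}
  {T : ℕ → ℝ → ℝ} {rT : ℕ → ℝ} {t : ℕ → ℝ} {ε : ℕ → ℕ} {γ : Set X} {h : ℝ → X}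

lemma param_comm (hL : IsLinearZipper m T rT t ε) (hSP : IsStructuralParam m S T t z h) :
    ∀ w : List ℕ, (∀ j ∈ w, j < m) → ∀ x ∈ Icc (0:ℝ) 1,
      compS T w x ∈ Icc (0:ℝ) 1 ∧ compS S w (h x) = h (compS T w x) := by
  intro w
  induction w with
  | nil => intro _ x hx; exact ⟨hx, rfl⟩
  | cons i l ih =>
    intro hw x hx
    have hi : i < m := hw i (by simp)
    have hl : ∀ j ∈ l, j < m := fun j hj => hw j (by simp [hj])
    obtain ⟨h1, h2⟩ := ih hl x hx
    have hTmem : T i (compS T l x) ∈ Icc (0:ℝ) 1 := by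
      have hmem : T i (compS T l x) ∈ T i '' Icc 0 1 := Set.mem_image_of_mem _ h1
      rw [LZ.image01 hL hi] at hmem
      exact ⟨le_trans (LZ.tmem hL hi.le).1 hmem.1, le_trans hmem.2 (LZ.tmem hL hi).2⟩
    refine ⟨hTmem, ?_⟩
    show S i (compS S l (h x)) = h (T i (compS T l x))
    rw [h2, hSP.2.2 i hi _ h1]

lemma compS_image_param (hL : IsLinearZipper m T rT t ε)
    (hSP : IsStructuralParam m S T t z h) {w : List ℕ} (hw : ∀ j ∈ w, j < m) :
    compS S w '' (h '' Icc 0 1) = h '' (compS T w '' Icc 0 1) := by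
  rw [← Set.image_comp, ← Set.image_comp]
  exact Set.image_congr (fun x hx => (param_comm hL hSP w hw x hx).2)

lemma compS_attr_subset (hA : IsAttractor m S γ) :
    ∀ w : List ℕ, (∀ j ∈ w, j < m) → compS S w '' γ ⊆ γ := by
  have hstep : ∀ i, i < m → S i '' γ ⊆ γ := by
    intro i hi
    conv_rhs => rw [hA.2.2]
    exact fun y hy => Set.mem_biUnion (Finset.mem_range.mpr hi) hy
  intro w
  induction w with
  | nil => intro _; simp [compS]
  | cons i l ih =>
    intro hw
    rw [compS_cons, Set.image_comp]
    exact subset_trans (Set.image_mono (ih (fun j hj => hw j (by simp [hj]))))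
      (hstep i (hw i (by simp)))

lemma diam_scale_le {f : X → X} {r : ℝ} (hr : 0 < r)
    (hf : ∀ x y, dist (f x) (f y) = r * dist x y) {A : Set X}
    (hb : Bornology.IsBounded (f '' A)) : r * diam A ≤ diam (f '' A) := by
  rw [mul_comm, ← le_div_iff₀ hr]
  apply diam_le_of_forall_dist_le (div_nonneg diam_nonneg hr.le)
  intro x hx y hy
  rw [le_div_iff₀ hr, mul_comm, ← hf]
  exact dist_le_diam_of_mem hb (Set.mem_image_of_mem f hx) (Set.mem_image_of_mem f hy)

lemma ratio_bound {U : Set X}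
    (hsim : IsSimilaritySystem m S p) (hA : IsAttractor m S γ)
    {w : List ℕ} {i₁ : ℕ} (hw : ∀ j ∈ w, j < m) (hi₁ : i₁ < m)
    (hsubset : compS S (w ++ [i₁]) '' γ ⊆ U) (hUγ : U ⊆ γ)
    {pmin C : ℝ} (hpmin : IsLeast (p '' {i | i < m}) pmin)
    (hdγ : 0 < diam γ) (hUd : diam U ≤ C) :
    ratioProd p w ≤ C / (diam γ * pmin) := by
  have hγb : Bornology.IsBounded γ := hA.2.1.isBounded
  have hwv : ∀ j ∈ w ++ [i₁], j < m := by
    intro j hj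
    rcases List.mem_append.mp hj with hj | hj
    · exact hw j hj
    · rw [List.mem_singleton.mp hj]; exact hi₁
  have hppos : ∀ i < m, 0 < p i := fun i hi => (hsim i hi).1
  have hrp : 0 < ratioProd p (w ++ [i₁]) := ratioProd_pos hppos _ hwv
  have hbnd : Bornology.IsBounded (compS S (w ++ [i₁]) '' γ) :=
    hγb.subset (compS_attr_subset hA _ hwv)
  have h1 : ratioProd p (w ++ [i₁]) * diam γ ≤ diam (compS S (w ++ [i₁]) '' γ) :=
    diam_scale_le hrp (compS_simil hsim _ hwv) hbnd
  have h2 : diam (compS S (w ++ [i₁]) '' γ) ≤ diam U :=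
    diam_mono (subset_trans hsubset (subset_refl U)) (hγb.subset hUγ) |>.trans
      (le_of_eq rfl)
  have hpm : 0 < pmin := by
    obtain ⟨i0, hi0, hp0⟩ := hpmin.1
    rw [← hp0]; exact hppos i0 hi0
  have hple : pmin ≤ p i₁ := hpmin.2 ⟨i₁, hi₁, rfl⟩
  have hsplit : ratioProd p (w ++ [i₁]) = ratioProd p w * p i₁ := by
    rw [ratioProd_append, ratioProd_cons, ratioProd_nil, mul_one]
  have hwpos : 0 < ratioProd p w := ratioProd_pos hppos w hw
  rw [le_div_iff₀ (by positivity)]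
  have key : ratioProd p w * pmin * diam γ ≤ C := by
    have e1 : ratioProd p w * pmin * diam γ ≤ ratioProd p w * p i₁ * diam γ := by
      nlinarith [mul_nonneg (mul_pos hwpos hdγ).le (sub_nonneg.mpr hple)]
    have e2 : ratioProd p w * p i₁ * diam γ = ratioProd p (w ++ [i₁]) * diam γ := by
      rw [hsplit]
    nlinarith [h1, h2, hUd]
  have : ratioProd p w * (diam γ * pmin) = ratioProd p w * pmin * diam γ := by ring
  rw [this]
  exact key


end Transport

section Final

lemma subarc_dichotomy_aux {X : Type*} [MetricSpace X] (m : ℕ)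
    (S : ℕ → X → X) (p : ℕ → ℝ) (z : ℕ → X) (ε : ℕ → ℕ) (γ : Set X)
    (hS : IsJordanZipper m S p z ε γ)
    (M : ℝ) (hγ : BoundedTurning γ M)
    (pmin : ℝ) (hpmin : IsLeast (p '' {i | i < m}) pmin)
    (g : ℝ → X) (hg : IsArcParam γ g)
    (s u : ℝ) (hs : s ∈ Icc (0:ℝ) 1) (hu : u ∈ Icc (0:ℝ) 1)
    (hxy : g s ≠ g u) (hsu : s ≤ u) :
    (∃ (l : List ℕ) (i₁ : ℕ), (∀ j ∈ l, j < m) ∧ i₁ < m ∧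
        compS S (l ++ [i₁]) '' γ ⊆ g '' uIcc s u ∧ g '' uIcc s u ⊆ compS S l '' γ ∧
        ratioProd p l ≤ M * dist (g s) (g u) / (diam γ * pmin)) ∨
    (∃ (l₁ l₂ : List ℕ) (i₁ j₁ : ℕ), (∀ j ∈ l₁, j < m) ∧ (∀ j ∈ l₂, j < m) ∧
        i₁ < m ∧ j₁ < m ∧
        (∃ pt, compS S l₁ '' γ ∩ compS S l₂ '' γ = {pt} ∧
          pt ∈ compS S l₁ '' ({z 0, z m} : Set X) ∧
          pt ∈ compS S l₂ '' ({z 0, z m} : Set X)) ∧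
        compS S (l₁ ++ [i₁]) '' γ ∪ compS S (l₂ ++ [j₁]) '' γ ⊆ g '' uIcc s u ∧
        g '' uIcc s u ⊆ compS S l₁ '' γ ∪ compS S l₂ '' γ ∧
        compS S (l₁ ++ [i₁]) '' γ ∩ compS S (l₂ ++ [j₁]) '' γ
          = compS S l₁ '' γ ∩ compS S l₂ '' γ ∧
        ratioProd p l₁ ≤ M * dist (g s) (g u) / (diam γ * pmin) ∧
        ratioProd p l₂ ≤ M * dist (g s) (g u) / (diam γ * pmin)) := by
  obtain ⟨hZ, hA, T, rT, t, h, hLZ, hSP, hInj, hIm⟩ := hS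
  have hsim : IsSimilaritySystem m S p := hZ.2.1
  have hhc : ContinuousOn h (Icc 0 1) := hSP.1
  obtain ⟨f, hfc, hfi, hfp⟩ := arc_match hhc hInj hIm hg.1 hg.2.1 hg.2.2
  have hfs := hfp s hs
  have hfu := hfp u hu
  set a := f s with hadef
  set b := f u with hbdef
  have hne : a ≠ b := by
    intro hEq
    exact hxy (by rw [← hfs.2, ← hfu.2, hEq])
  have hsubarc : g '' uIcc s u = h '' uIcc a b := by
    rw [uIcc_of_le hsu]
    exact param_subarc hsu hs hu hfc hfi (fun x hx => (hfp x hx).2)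
  set A := min a b with hAdef
  set B := max a b with hBdef
  have hAB : uIcc a b = Icc A B := rfl
  have hA0 : (0:ℝ) ≤ A := le_min hfs.1.1 hfu.1.1
  have hB1 : B ≤ 1 := max_le hfs.1.2 hfu.1.2
  have hABlt : A < B := min_lt_max.mpr hne
  have hm : 1 ≤ m := hZ.1
  have hmne : (Finset.range m).Nonempty := Finset.nonempty_range_iff.mpr (by omega)
  set rmax := (Finset.range m).sup' hmne rT with hrmaxdef
  have hrm : ∀ i < m, rT i ≤ rmax := fun i hi =>
    Finset.le_sup' rT (Finset.mem_range.mpr hi)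
  have hrm0 : 0 < rmax := lt_of_lt_of_le (LZ.rpos hLZ hm) (hrm 0 hm)
  have hrm1 : rmax < 1 := by
    rw [hrmaxdef, Finset.sup'_lt_iff]
    exact fun i hi => LZ.rlt hLZ (Finset.mem_range.mp hi)
  obtain ⟨n₀, hn₀⟩ := exists_pow_lt_of_lt_one (sub_pos.mpr hABlt) hrm1
  -- common facts
  have himg : ∀ w : List ℕ, (∀ j ∈ w, j < m) →
      compS S w '' γ = h '' (compS T w '' Icc 0 1) := by
    intro w hw
    rw [← hIm]
    exact compS_image_param hLZ hSP hw
  have happval : ∀ (w : List ℕ) (i₁ : ℕ), (∀ j ∈ w, j < m) → i₁ < m →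
      (∀ j ∈ w ++ [i₁], j < m) := by
    intro w i₁ hw hi₁ j hj
    rcases List.mem_append.mp hj with hj | hj
    · exact hw j hj
    · rw [List.mem_singleton.mp hj]; exact hi₁
  have hUγ : g '' uIcc s u ⊆ γ := by
    rw [← hg.2.2]
    refine Set.image_mono ?_
    rw [uIcc_of_le hsu]
    exact Icc_subset_Icc hs.1 hu.2
  have hgsγ : g s ∈ γ := hg.2.2 ▸ Set.mem_image_of_mem g hs
  have hguγ : g u ∈ γ := hg.2.2 ▸ Set.mem_image_of_mem g hu
  have hdγ : 0 < diam γ :=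
    lt_of_lt_of_le (dist_pos.mpr hxy) (dist_le_diam_of_mem hA.2.1.isBounded hgsγ hguγ)
  have hUd : diam (g '' uIcc s u) ≤ M * dist (g s) (g u) := hγ.2 g hg s hs u hu
  have hend : h 0 = z 0 ∧ h 1 = z m := by
    constructor
    · have := hSP.2.1 0 (Nat.zero_le m); rwa [LZ.t0 hLZ] at this
    · have := hSP.2.1 m le_rfl; rwa [LZ.tm hLZ] at this
  rcases LZ.mainInt hLZ hrm0 hrm hrm1 n₀ A B hA0 hABlt hB1 hn₀ with
    ⟨w, i₁, hw, hi₁, h1, h2⟩ | ⟨w₁, w₂, i₁, j₁, pt, hw₁, hw₂, hi₁, hj₁, hcap,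
      hp1, hp2, hcup1, hcup2, hcap2⟩
  · left
    have c1 : compS S (w ++ [i₁]) '' γ ⊆ g '' uIcc s u := by
      rw [himg _ (happval w i₁ hw hi₁), hsubarc, hAB]
      exact Set.image_mono h1
    have c2 : g '' uIcc s u ⊆ compS S w '' γ := by
      rw [himg w hw, hsubarc, hAB]
      exact Set.image_mono h2
    exact ⟨w, i₁, hw, hi₁, c1, c2, ratio_bound hsim hA hw hi₁ c1 hUγ hpmin hdγ hUd⟩
  · right
    have hv₁ := happval w₁ i₁ hw₁ hi₁
    have hv₂ := happval w₂ j₁ hw₂ hj₁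
    have hptE₁ : pt ∈ compS T w₁ '' Icc 0 1 := by
      rcases hp1 with hh | hh
      · rw [hh]; exact (LZ.endpoint_mem hLZ _).1
      · rw [hh]; exact (LZ.endpoint_mem hLZ _).2
    have hcapX : compS S w₁ '' γ ∩ compS S w₂ '' γ = {h pt} := by
      rw [himg w₁ hw₁, himg w₂ hw₂,
        ← Set.InjOn.image_inter hInj (LZ.cell_subset hLZ w₁ hw₁) (LZ.cell_subset hLZ w₂ hw₂),
        hcap, Set.image_singleton]
    have hepX : ∀ (w : List ℕ), (∀ j ∈ w, j < m) →
        (pt = compS T w 0 ∨ pt = compS T w 1) →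
        h pt ∈ compS S w '' ({z 0, z m} : Set X) := by
      intro w hw hp
      rcases hp with hh | hh
      · have hc := (param_comm hLZ hSP w hw 0 (by norm_num)).2
        refine ⟨z 0, by simp, ?_⟩
        rw [← hend.1, hc, ← hh]
      · have hc := (param_comm hLZ hSP w hw 1 (by norm_num)).2
        refine ⟨z m, by simp, ?_⟩
        rw [← hend.2, hc, ← hh]
    have c1 : compS S (w₁ ++ [i₁]) '' γ ⊆ g '' uIcc s u := by
      rw [himg _ hv₁, hsubarc, hAB]
      exact Set.image_mono (subset_trans Set.subset_union_left hcup1)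
    have c2 : compS S (w₂ ++ [j₁]) '' γ ⊆ g '' uIcc s u := by
      rw [himg _ hv₂, hsubarc, hAB]
      exact Set.image_mono (subset_trans Set.subset_union_right hcup1)
    refine ⟨w₁, w₂, i₁, j₁, hw₁, hw₂, hi₁, hj₁,
      ⟨h pt, hcapX, hepX w₁ hw₁ hp1, hepX w₂ hw₂ hp2⟩, ?_, ?_, ?_,
      ratio_bound hsim hA hw₁ hi₁ c1 hUγ hpmin hdγ hUd,
      ratio_bound hsim hA hw₂ hj₁ c2 hUγ hpmin hdγ hUd⟩
    · exact Set.union_subset c1 c2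
    · rw [himg w₁ hw₁, himg w₂ hw₂, hsubarc, hAB, ← Set.image_union]
      exact Set.image_mono hcup2
    · have e1 : compS S (w₁ ++ [i₁]) '' γ ∩ compS S (w₂ ++ [j₁]) '' γ = {h pt} := by
        rw [himg _ hv₁, himg _ hv₂,
          ← Set.InjOn.image_inter hInj (LZ.cell_subset hLZ _ hv₁) (LZ.cell_subset hLZ _ hv₂),
          hcap2, Set.image_singleton]
      rw [e1, hcapX]


end Final

end AuxProofs

/-- dichotomy for subarcs of the attractor of a Jordan zipper of bounded
turning: every subarc `γ_{xy}` either is squeezed between a cell `γ_{i i_{k+1}}` and the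
cell `γ_i`, or between a union of two extended cells and a union of two adjacent cells;
in both cases `p_i ≤ M‖x-y‖/(|γ| p_min)`. -/
theorem subarc_dichotomy {n : ℕ} (m : ℕ)
    (S : ℕ → EuclideanSpace ℝ (Fin n) → EuclideanSpace ℝ (Fin n)) (p : ℕ → ℝ)
    (z : ℕ → EuclideanSpace ℝ (Fin n)) (ε : ℕ → ℕ)
    (γ : Set (EuclideanSpace ℝ (Fin n)))
    (hS : IsJordanZipper m S p z ε γ)
    (M : ℝ) (hγ : BoundedTurning γ M)
    (pmin : ℝ) (hpmin : IsLeast (p '' {i | i < m}) pmin)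
    (g : ℝ → EuclideanSpace ℝ (Fin n)) (hg : IsArcParam γ g)
    (s u : ℝ) (hs : s ∈ Icc (0:ℝ) 1) (hu : u ∈ Icc (0:ℝ) 1)
    (hxy : g s ≠ g u) :
    (∃ (l : List ℕ) (i₁ : ℕ), (∀ j ∈ l, j < m) ∧ i₁ < m ∧
        compS S (l ++ [i₁]) '' γ ⊆ g '' uIcc s u ∧ g '' uIcc s u ⊆ compS S l '' γ ∧
        ratioProd p l ≤ M * dist (g s) (g u) / (diam γ * pmin)) ∨
    (∃ (l₁ l₂ : List ℕ) (i₁ j₁ : ℕ), (∀ j ∈ l₁, j < m) ∧ (∀ j ∈ l₂, j < m) ∧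
        i₁ < m ∧ j₁ < m ∧
        (∃ pt, compS S l₁ '' γ ∩ compS S l₂ '' γ = {pt} ∧
          pt ∈ compS S l₁ '' ({z 0, z m} : Set (EuclideanSpace ℝ (Fin n))) ∧
          pt ∈ compS S l₂ '' ({z 0, z m} : Set (EuclideanSpace ℝ (Fin n)))) ∧
        compS S (l₁ ++ [i₁]) '' γ ∪ compS S (l₂ ++ [j₁]) '' γ ⊆ g '' uIcc s u ∧
        g '' uIcc s u ⊆ compS S l₁ '' γ ∪ compS S l₂ '' γ ∧
        compS S (l₁ ++ [i₁]) '' γ ∩ compS S (l₂ ++ [j₁]) '' γ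
          = compS S l₁ '' γ ∩ compS S l₂ '' γ ∧
        ratioProd p l₁ ≤ M * dist (g s) (g u) / (diam γ * pmin) ∧
        ratioProd p l₂ ≤ M * dist (g s) (g u) / (diam γ * pmin)) := by
  rcases le_total s u with hsu | hsu
  · exact subarc_dichotomy_aux m S p z ε γ hS M hγ pmin hpmin g hg s u hs hu hxy hsu
  · have H := subarc_dichotomy_aux m S p z ε γ hS M hγ pmin hpmin g hg u s hu hs hxy.symm hsu
    rw [uIcc_comm u s, dist_comm (g u) (g s)] at H
    exact H
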